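/- Suppose |𝒯| < min{|𝒳|, |𝒴|}. If there exists a maximizer Q* of H_Q(T|X,Y) over Δ_P with full support (Q*(t,x,y) > 0 for all t,x,y), then the maximizer is not unique. -/

import Mathlib

open scoped BigOperators
noncomputable section

variable {T X Y : Type*}

/-- A joint probability distribution of `(T,X,Y)`, as a function `T → X → Y → ℝ`. -/
def IsDist [Fintype T] [Fintype X] [Fintype Y] (P : T → X → Y → ℝ) : Prop :=
  (∀ t x y, 0 ≤ P t x y) ∧ ∑ t, ∑ x, ∑ y, P t x y = 1

/-- The `(T,X)`-marginal. -/
def margTX [Fintype Y] (P : T → X → Y → ℝ) (t : T) (x : X) : ℝ := ∑ y, P t x y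

/-- The `(T,Y)`-marginal. -/
def margTY [Fintype X] (P : T → X → Y → ℝ) (t : T) (y : Y) : ℝ := ∑ x, P t x y

/-- The `(X,Y)`-marginal. -/
def margXY [Fintype T] (P : T → X → Y → ℝ) (x : X) (y : Y) : ℝ := ∑ t, P t x y

/-- The `T`-marginal. -/
def margT [Fintype X] [Fintype Y] (P : T → X → Y → ℝ) (t : T) : ℝ := ∑ x, ∑ y, P t x y

/-- The `Y`-marginal. -/
def margY [Fintype T] [Fintype X] (P : T → X → Y → ℝ) (y : Y) : ℝ := ∑ t, ∑ x, P t x y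

/-- `Δ_P`: the polytope of joint distributions with the same `(T,X)`- and
`(T,Y)`-marginals as `P`. -/
def deltaP [Fintype T] [Fintype X] [Fintype Y] (P : T → X → Y → ℝ) :
    Set (T → X → Y → ℝ) :=
  {Q | IsDist Q ∧ (∀ t x, margTX Q t x = margTX P t x) ∧
    (∀ t y, margTY Q t y = margTY P t y)}

/-- The conditional entropy `H_Q(T|X,Y)` (with the convention `0 log 0 = 0`,
automatic since `Real.log 0 = 0`). -/
def condEntTXY [Fintype T] [Fintype X] [Fintype Y] (Q : T → X → Y → ℝ) : ℝ :=
  ∑ t, ∑ x, ∑ y, -(Q t x y * Real.log (Q t x y / margXY Q x y))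

/-- The conditional mutual information `I_Q(T:X|Y)`. -/
def CMI [Fintype T] [Fintype X] [Fintype Y] (Q : T → X → Y → ℝ) : ℝ :=
  ∑ t, ∑ x, ∑ y,
    Q t x y * Real.log (Q t x y * margY Q y / (margTY Q t y * margXY Q x y))


section Aux
variable [Fintype T] [Fintype X] [Fintype Y]

lemma term_hasDerivAt (a b c d : ℝ) (ha : 0 < a) (hb : 0 < b) :
    HasDerivAt (fun ε : ℝ => -((a + ε * c) * Real.log ((a + ε * c) / (b + ε * d))))
      (-(c * Real.log (a / b) + c - a * d / b)) 0 := by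
  have h1 : HasDerivAt (fun ε : ℝ => a + ε * c) c 0 := by
    simpa using ((hasDerivAt_id (0:ℝ)).mul_const c).const_add a
  have h2 : HasDerivAt (fun ε : ℝ => b + ε * d) d 0 := by
    simpa using ((hasDerivAt_id (0:ℝ)).mul_const d).const_add b
  have hq : HasDerivAt (fun ε : ℝ => (a + ε * c) / (b + ε * d))
      ((c * b - a * d) / (b * b)) 0 := by
    have := h1.fun_div h2 (by simpa using hb.ne')
    simpa [sq] using this
  have hlog : HasDerivAt (fun ε : ℝ => Real.log ((a + ε * c) / (b + ε * d)))
      (((c * b - a * d) / (b * b)) / (a / b)) 0 := by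
    have := hq.log (by simp only [zero_mul, add_zero]; positivity)
    simpa using this
  have := (h1.fun_mul hlog).fun_neg
  convert this using 1
  · rfl
  · rfl
  simp only [zero_mul, add_zero]
  field_simp
  ring

lemma sum_single_mul {T : Type*} [Fintype T] [DecidableEq T] (t0 : T) (h : T → ℝ) :
    ∑ t, (if t = t0 then (1:ℝ) else 0) * h t = h t0 := by
  simp [ite_mul]

lemma sum_pair_mul {X : Type*} [Fintype X] [DecidableEq X] (x1 x2 : X) (h : X → ℝ) :
    ∑ x, ((if x = x1 then (1:ℝ) else 0) - (if x = x2 then 1 else 0)) * h x = h x1 - h x2 := by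
  simp [sub_mul, Finset.sum_sub_distrib, ite_mul]

lemma perturb_mem [Nonempty T] [Nonempty X] [Nonempty Y]
    (P Qs : T → X → Y → ℝ) (hQs : Qs ∈ deltaP P) (hfull : ∀ t x y, 0 < Qs t x y)
    (D : T → X → Y → ℝ) (hDy : ∀ t x, ∑ y, D t x y = 0) (hDx : ∀ t y, ∑ x, D t x y = 0) :
    ∃ ε0 > 0, ∀ ε : ℝ, |ε| ≤ ε0 →
      (∀ t x y, 0 < Qs t x y + ε * D t x y) ∧
      (fun t x y => Qs t x y + ε * D t x y) ∈ deltaP P := by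
  set F : T × X × Y → ℝ := fun p => Qs p.1 p.2.1 p.2.2 / (|D p.1 p.2.1 p.2.2| + 1) with hF
  have hne : (Finset.univ : Finset (T × X × Y)).Nonempty := Finset.univ_nonempty
  refine ⟨Finset.univ.inf' hne F, ?_, ?_⟩
  · rw [gt_iff_lt, Finset.lt_inf'_iff]
    intro p _
    have := hfull p.1 p.2.1 p.2.2
    positivity
  · intro ε hε
    have hpos : ∀ t x y, 0 < Qs t x y + ε * D t x y := by
      intro t x y
      have h1 : Finset.univ.inf' hne F ≤ F (t, x, y) := Finset.inf'_le _ (Finset.mem_univ _)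
      have h2 : |ε * D t x y| < Qs t x y := by
        have hD1 : (0:ℝ) < |D t x y| + 1 := by positivity
        have e0pos : 0 < Finset.univ.inf' hne F := by
          rw [Finset.lt_inf'_iff]; intro p _
          have := hfull p.1 p.2.1 p.2.2; positivity
        calc |ε * D t x y| = |ε| * |D t x y| := abs_mul _ _
          _ ≤ Finset.univ.inf' hne F * |D t x y| :=
              mul_le_mul_of_nonneg_right hε (abs_nonneg _)
          _ < Finset.univ.inf' hne F * (|D t x y| + 1) :=
              mul_lt_mul_of_pos_left (lt_add_one _) e0pos
          _ ≤ F (t, x, y) * (|D t x y| + 1) := mul_le_mul_of_nonneg_right h1 hD1.le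
          _ = Qs t x y := div_mul_cancel₀ _ hD1.ne'
      have := neg_abs_le (ε * D t x y)
      linarith [abs_nonneg (ε * D t x y), (abs_lt.mp h2).1]
    refine ⟨hpos, ?_, ?_, ?_⟩
    · refine ⟨fun t x y => (hpos t x y).le, ?_⟩
      have : ∀ t x, ∑ y, (Qs t x y + ε * D t x y) = ∑ y, Qs t x y := by
        intro t x
        rw [Finset.sum_add_distrib, ← Finset.mul_sum, hDy, mul_zero, add_zero]
      simp only [this]
      exact hQs.1.2
    · intro t x
      unfold margTX
      rw [Finset.sum_add_distrib, ← Finset.mul_sum, hDy, mul_zero, add_zero]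
      exact hQs.2.1 t x
    · intro t y
      unfold margTY
      rw [Finset.sum_add_distrib, ← Finset.mul_sum, hDx, mul_zero, add_zero]
      exact hQs.2.2 t y

lemma triple_sum_E {T X Y : Type*} [Fintype T] [Fintype X] [Fintype Y]
    [DecidableEq T] [DecidableEq X] [DecidableEq Y]
    (t0 : T) (x1 x2 : X) (y1 y2 : Y) (L : T → X → Y → ℝ) :
    ∑ t, ∑ x, ∑ y,
      ((if t = t0 then (1:ℝ) else 0) *
        (((if x = x1 then (1:ℝ) else 0) - if x = x2 then 1 else 0) *
          ((if y = y1 then (1:ℝ) else 0) - if y = y2 then 1 else 0))) * L t x y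
    = (L t0 x1 y1 - L t0 x1 y2) - (L t0 x2 y1 - L t0 x2 y2) := by
  simp [ite_mul, sub_mul, Finset.sum_sub_distrib]

lemma rank_one [Nonempty T] [Nonempty X] [Nonempty Y]
    (P Qs : T → X → Y → ℝ) (hQs : Qs ∈ deltaP P)
    (hmax : ∀ Q ∈ deltaP P, condEntTXY Q ≤ condEntTXY Qs)
    (hfull : ∀ t x y, 0 < Qs t x y) (t0 : T) (x1 x2 : X) (y1 y2 : Y) :
    (Qs t0 x1 y1 / margXY Qs x1 y1) * (Qs t0 x2 y2 / margXY Qs x2 y2)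
      = (Qs t0 x1 y2 / margXY Qs x1 y2) * (Qs t0 x2 y1 / margXY Qs x2 y1) := by
  classical
  have hm : ∀ x y, 0 < margXY Qs x y := fun x y =>
    Finset.sum_pos (fun t _ => hfull t x y) Finset.univ_nonempty
  set E : T → X → Y → ℝ := fun t x y =>
    (if t = t0 then (1:ℝ) else 0) *
      (((if x = x1 then (1:ℝ) else 0) - if x = x2 then 1 else 0) *
        ((if y = y1 then (1:ℝ) else 0) - if y = y2 then 1 else 0)) with hE
  have hDy : ∀ t x, ∑ y, E t x y = 0 := by
    intro t x
    rw [hE]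
    simp only
    rw [← Finset.mul_sum, ← Finset.mul_sum]
    simp [Finset.sum_sub_distrib]
  have hDx : ∀ t y, ∑ x, E t x y = 0 := by
    intro t y
    rw [hE]
    simp only
    have : ∀ x : X, (if t = t0 then (1:ℝ) else 0) *
        (((if x = x1 then (1:ℝ) else 0) - if x = x2 then 1 else 0) *
          ((if y = y1 then (1:ℝ) else 0) - if y = y2 then 1 else 0)) =
        ((if t = t0 then (1:ℝ) else 0) * ((if y = y1 then (1:ℝ) else 0) - if y = y2 then 1 else 0)) *
          ((if x = x1 then (1:ℝ) else 0) - if x = x2 then 1 else 0) := fun x => by ring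
    rw [Finset.sum_congr rfl fun x _ => this x, ← Finset.mul_sum]
    simp [Finset.sum_sub_distrib]
  set e : X → Y → ℝ := fun x y => ∑ t, E t x y with he
  have heval : ∀ x y, e x y =
      ((if x = x1 then (1:ℝ) else 0) - if x = x2 then 1 else 0) *
        ((if y = y1 then (1:ℝ) else 0) - if y = y2 then 1 else 0) := by
    intro x y
    rw [he]
    simp only [hE]
    rw [← Finset.sum_mul]
    simp
  obtain ⟨ε0, hε0, hfeas⟩ := perturb_mem P Qs hQs hfull E hDy hDx
  have hmarg : ∀ (ε : ℝ) (x : X) (y : Y),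
      margXY (fun t x y => Qs t x y + ε * E t x y) x y = margXY Qs x y + ε * e x y := by
    intro ε x y
    unfold margXY
    rw [Finset.sum_add_distrib, ← Finset.mul_sum, he]
  set G : ℝ → ℝ := fun ε => ∑ t, ∑ x, ∑ y,
    -((Qs t x y + ε * E t x y) *
      Real.log ((Qs t x y + ε * E t x y) / (margXY Qs x y + ε * e x y))) with hG
  have hGeq : ∀ ε : ℝ, G ε = condEntTXY (fun t x y => Qs t x y + ε * E t x y) := by
    intro ε
    rw [hG]
    unfold condEntTXY
    refine Finset.sum_congr rfl fun t _ => Finset.sum_congr rfl fun x _ =>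
      Finset.sum_congr rfl fun y _ => ?_
    rw [hmarg]
  have hGderiv : HasDerivAt G (∑ t, ∑ x, ∑ y,
      -(E t x y * Real.log (Qs t x y / margXY Qs x y) + E t x y
        - Qs t x y * e x y / margXY Qs x y)) 0 := by
    rw [hG]
    apply HasDerivAt.fun_sum
    intro t _
    apply HasDerivAt.fun_sum
    intro x _
    apply HasDerivAt.fun_sum
    intro y _
    exact term_hasDerivAt _ _ _ _ (hfull t x y) (hm x y)
  have hGmax : IsLocalMax G 0 := by
    have h0 : G 0 = condEntTXY Qs := by
      rw [hGeq 0]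
      simp [condEntTXY]
    filter_upwards [Metric.ball_mem_nhds (0:ℝ) hε0] with ε hε
    have hin := hfeas ε (by rw [Real.ball_eq_Ioo] at hε; rw [abs_le]; constructor <;> linarith [hε.1, hε.2])
    rw [h0, hGeq ε]
    exact hmax _ hin.2
  have hzero := hGmax.hasDerivAt_eq_zero hGderiv
  -- now compute the derivative sum
  set L : T → X → Y → ℝ := fun t x y => Real.log (Qs t x y / margXY Qs x y) with hL
  have hsplit : (∑ t, ∑ x, ∑ y,
      -(E t x y * L t x y + E t x y - Qs t x y * e x y / margXY Qs x y))
      = -(∑ t, ∑ x, ∑ y, E t x y * L t x y) - (∑ t, ∑ x, ∑ y, E t x y)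
        + (∑ t, ∑ x, ∑ y, Qs t x y * e x y / margXY Qs x y) := by
    have : ∀ (t : T) (x : X) (y : Y),
        -(E t x y * L t x y + E t x y - Qs t x y * e x y / margXY Qs x y)
        = -(E t x y * L t x y) - E t x y + Qs t x y * e x y / margXY Qs x y :=
      fun t x y => by ring
    simp only [this, Finset.sum_add_distrib, Finset.sum_sub_distrib, Finset.sum_neg_distrib]
  have hS1 : (∑ t, ∑ x, ∑ y, E t x y * L t x y)
      = (L t0 x1 y1 - L t0 x1 y2) - (L t0 x2 y1 - L t0 x2 y2) := by
    rw [hE]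
    exact triple_sum_E t0 x1 x2 y1 y2 L
  have hS2 : (∑ t, ∑ x, ∑ y, E t x y) = 0 := by
    refine Finset.sum_eq_zero fun t _ => Finset.sum_eq_zero fun x _ => hDy t x
  have hS3 : (∑ t, ∑ x, ∑ y, Qs t x y * e x y / margXY Qs x y) = 0 := by
    rw [Finset.sum_comm]
    have hx : ∀ x : X, (∑ t, ∑ y, Qs t x y * e x y / margXY Qs x y) = ∑ y, e x y := by
      intro x
      rw [Finset.sum_comm]
      refine Finset.sum_congr rfl fun y _ => ?_
      have h1 : ∀ t : T, Qs t x y * e x y / margXY Qs x y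
          = e x y / margXY Qs x y * Qs t x y := fun t => by ring
      rw [Finset.sum_congr rfl fun t _ => h1 t, ← Finset.mul_sum,
        show (∑ t, Qs t x y) = margXY Qs x y from rfl,
        div_mul_cancel₀ _ (hm x y).ne']
    rw [Finset.sum_congr rfl fun x _ => hx x]
    simp only [heval]
    rw [← Finset.sum_mul_sum]
    simp [Finset.sum_sub_distrib]
  rw [hsplit, hS1, hS2, hS3] at hzero
  have hlog : L t0 x1 y1 + L t0 x2 y2 = L t0 x1 y2 + L t0 x2 y1 := by linarith
  have hr : ∀ (t : T) (x : X) (y : Y), 0 < Qs t x y / margXY Qs x y :=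
    fun t x y => div_pos (hfull t x y) (hm x y)
  calc Qs t0 x1 y1 / margXY Qs x1 y1 * (Qs t0 x2 y2 / margXY Qs x2 y2)
      = Real.exp (L t0 x1 y1 + L t0 x2 y2) := by
        rw [Real.exp_add, hL]
        simp only []
        rw [Real.exp_log (hr t0 x1 y1), Real.exp_log (hr t0 x2 y2)]
    _ = Real.exp (L t0 x1 y2 + L t0 x2 y1) := by rw [hlog]
    _ = Qs t0 x1 y2 / margXY Qs x1 y2 * (Qs t0 x2 y1 / margXY Qs x2 y1) := by
        rw [Real.exp_add, hL]
        simp only []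
        rw [Real.exp_log (hr t0 x1 y2), Real.exp_log (hr t0 x2 y1)]

lemma exists_kernel_vec {T X : Type*} [Fintype T] [Fintype X]
    (hc : Fintype.card T < Fintype.card X) (a : T → X → ℝ) :
    ∃ u : X → ℝ, u ≠ 0 ∧ ∀ t, ∑ x, a t x * u x = 0 := by
  let f : (X → ℝ) →ₗ[ℝ] (T → ℝ) := Matrix.mulVecLin (Matrix.of a)
  have hninj : ¬ Function.Injective f := by
    intro hinj
    have h := LinearMap.finrank_le_finrank_of_injective hinj
    simp only [Module.finrank_fintype_fun_eq_card] at h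
    omega
  obtain ⟨u1, u2, heq, hne⟩ := Function.not_injective_iff.mp hninj
  refine ⟨u1 - u2, sub_ne_zero.mpr hne, fun t => ?_⟩
  have h0 : f (u1 - u2) = 0 := by rw [map_sub, heq, sub_self]
  have h1 := congrFun h0 t
  simpa [f, Matrix.mulVecLin_apply, Matrix.mulVec, dotProduct] using h1

end Aux

/-- Suppose `|𝒯| < min{|𝒳|,|𝒴|}`.  If there is a maximizer of `H_Q(T|X,Y)` over
`Δ_P` with full support, then the maximizer is not unique. -/
theorem nonuniqueness_cardinalities [Fintype T] [Fintype X] [Fintype Y]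
    (hcard : Fintype.card T < min (Fintype.card X) (Fintype.card Y))
    (P Qs : T → X → Y → ℝ) (hP : IsDist P)
    (hQs : Qs ∈ deltaP P) (hmax : ∀ Q ∈ deltaP P, condEntTXY Q ≤ condEntTXY Qs)
    (hfull : ∀ t x y, 0 < Qs t x y) :
    ∃ Q' ∈ deltaP P, Q' ≠ Qs ∧ ∀ Q ∈ deltaP P, condEntTXY Q ≤ condEntTXY Q' := by
  classical
  -- nonemptiness
  have hsum1 := hQs.1.2
  have hT : Nonempty T := by
    by_contra h
    rw [not_nonempty_iff] at h
    simp [Finset.univ_eq_empty] at hsum1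
  have hX : Nonempty X := by
    by_contra h
    rw [not_nonempty_iff] at h
    simp [Finset.univ_eq_empty] at hsum1
  have hY : Nonempty Y := by
    by_contra h
    rw [not_nonempty_iff] at h
    simp [Finset.univ_eq_empty] at hsum1
  have x0 : X := Classical.arbitrary X
  have y0 : Y := Classical.arbitrary Y
  have hm : ∀ x y, 0 < margXY Qs x y := fun x y =>
    Finset.sum_pos (fun t _ => hfull t x y) Finset.univ_nonempty
  set r : T → X → Y → ℝ := fun t x y => Qs t x y / margXY Qs x y with hrdef
  have hrpos : ∀ t x y, 0 < r t x y := fun t x y => div_pos (hfull t x y) (hm x y)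
  set a : T → X → ℝ := fun t x => r t x y0 with hadef
  set b : T → Y → ℝ := fun t y => r t x0 y / r t x0 y0 with hbdef
  have hapos : ∀ t x, 0 < a t x := fun t x => hrpos t x y0
  have hbpos : ∀ t y, 0 < b t y := fun t y => div_pos (hrpos t x0 y) (hrpos t x0 y0)
  have hab : ∀ t x y, a t x * b t y = r t x y := by
    intro t x y
    have h := rank_one P Qs hQs hmax hfull t x x0 y y0
    -- h : r t x y * r t x0 y0 = r t x y0 * r t x0 y
    have h' : r t x y * r t x0 y0 = r t x y0 * r t x0 y := h
    show r t x y0 * (r t x0 y / r t x0 y0) = r t x y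
    have h0 := hrpos t x0 y0
    rw [← mul_div_assoc, div_eq_iff h0.ne']
    linarith [h']
  have hsum_r : ∀ x y, (∑ t, r t x y) = 1 := by
    intro x y
    show (∑ t, Qs t x y / margXY Qs x y) = 1
    rw [← Finset.sum_div]
    exact div_self (hm x y).ne'
  obtain ⟨u, hu0, hu⟩ := exists_kernel_vec (lt_of_lt_of_le hcard (min_le_left _ _)) a
  obtain ⟨v, hv0, hv⟩ := exists_kernel_vec (lt_of_lt_of_le hcard (min_le_right _ _)) b
  set D : T → X → Y → ℝ := fun t x y => a t x * b t y * (u x * v y) with hDdef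
  have hDy : ∀ t x, ∑ y, D t x y = 0 := by
    intro t x
    have h1 : ∀ y : Y, D t x y = (a t x * u x) * (b t y * v y) := fun y => by
      rw [hDdef]; ring
    rw [Finset.sum_congr rfl fun y _ => h1 y, ← Finset.mul_sum, hv t, mul_zero]
  have hDx : ∀ t y, ∑ x, D t x y = 0 := by
    intro t y
    have h1 : ∀ x : X, D t x y = (b t y * v y) * (a t x * u x) := fun x => by
      rw [hDdef]; ring
    rw [Finset.sum_congr rfl fun x _ => h1 x, ← Finset.mul_sum, hu t, mul_zero]
  have hmargD : ∀ x y, (∑ t, D t x y) = u x * v y := by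
    intro x y
    have h1 : ∀ t : T, D t x y = (a t x * b t y) * (u x * v y) := fun t => by
      rw [hDdef]
    rw [Finset.sum_congr rfl fun t _ => h1 t, ← Finset.sum_mul]
    rw [Finset.sum_congr rfl fun t _ => hab t x y, hsum_r, one_mul]
  obtain ⟨ε0, hε0, hfeas⟩ := perturb_mem P Qs hQs hfull D hDy hDx
  set K : ℝ := ∑ t, ∑ x, ∑ y, -(D t x y * Real.log (r t x y)) with hKdef
  -- the entropy along the perturbation is affine
  have key : ∀ ε : ℝ, |ε| ≤ ε0 →
      condEntTXY (fun t x y => Qs t x y + ε * D t x y) = condEntTXY Qs + ε * K := by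
    intro ε hε
    have hpos := (hfeas ε hε).1
    have hmarg : ∀ x y, margXY (fun t x y => Qs t x y + ε * D t x y) x y
        = margXY Qs x y + ε * (u x * v y) := by
      intro x y
      unfold margXY
      rw [Finset.sum_add_distrib, ← Finset.mul_sum, hmargD]
    have hmpos : ∀ x y, 0 < margXY Qs x y + ε * (u x * v y) := by
      intro x y
      have : margXY Qs x y + ε * (u x * v y)
          = ∑ t, (Qs t x y + ε * D t x y) := by
        rw [Finset.sum_add_distrib, ← Finset.mul_sum, hmargD]; rfl
      rw [this]
      exact Finset.sum_pos (fun t _ => hpos t x y) Finset.univ_nonempty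
    have hQfact : ∀ t x y, Qs t x y + ε * D t x y
        = r t x y * (margXY Qs x y + ε * (u x * v y)) := by
      intro t x y
      have h1 : Qs t x y = r t x y * margXY Qs x y :=
        (div_mul_cancel₀ _ (hm x y).ne').symm
      have h2 : D t x y = r t x y * (u x * v y) := by
        rw [hDdef, ← hab t x y]
      rw [h1, h2]; ring
    have hratio : ∀ t x y,
        (Qs t x y + ε * D t x y) / margXY (fun t x y => Qs t x y + ε * D t x y) x y
        = r t x y := by
      intro t x y
      rw [hmarg, hQfact]
      exact mul_div_cancel_right₀ _ (hmpos x y).ne'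
    unfold condEntTXY
    have hterm : ∀ t x y,
        -((Qs t x y + ε * D t x y) *
            Real.log ((Qs t x y + ε * D t x y) /
              margXY (fun t x y => Qs t x y + ε * D t x y) x y))
        = -(Qs t x y * Real.log (r t x y)) + ε * -(D t x y * Real.log (r t x y)) := by
      intro t x y
      rw [hratio]
      ring
    have hterm0 : ∀ t x y,
        -(Qs t x y * Real.log (Qs t x y / margXY Qs x y))
        = -(Qs t x y * Real.log (r t x y)) := by
      intro t x y
      rw [hrdef]
    simp only [hterm, hterm0, hKdef, Finset.sum_add_distrib, ← Finset.mul_sum]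
  have hKzero : K = 0 := by
    have hp := key ε0 (by rw [abs_of_pos hε0])
    have hn := key (-ε0) (by rw [abs_neg, abs_of_pos hε0])
    have h1 := hmax _ (hfeas ε0 (by rw [abs_of_pos hε0])).2
    have h2 := hmax _ (hfeas (-ε0) (by rw [abs_neg, abs_of_pos hε0])).2
    rw [hp] at h1
    rw [hn] at h2
    have h3 : ε0 * K ≤ 0 := by linarith
    have h4 : 0 ≤ ε0 * K := by linarith
    have := le_antisymm h3 h4
    rcases mul_eq_zero.mp this with h | h
    · exact absurd h hε0.ne'
    · exact h
  set Qp : T → X → Y → ℝ := fun t x y => Qs t x y + ε0 * D t x y with hQp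
  have hmem := (hfeas ε0 (by rw [abs_of_pos hε0])).2
  have hEnt : condEntTXY Qp = condEntTXY Qs := by
    rw [hQp, key ε0 (by rw [abs_of_pos hε0]), hKzero, mul_zero, add_zero]
  have hne : Qp ≠ Qs := by
    obtain ⟨xs, hxs⟩ : ∃ x, u x ≠ 0 := by
      by_contra h
      push_neg at h
      exact hu0 (funext h)
    obtain ⟨ys, hys⟩ : ∃ y, v y ≠ 0 := by
      by_contra h
      push_neg at h
      exact hv0 (funext h)
    have t : T := Classical.arbitrary T
    intro h
    have h1 := congrFun (congrFun (congrFun h t) xs) ys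
    rw [hQp] at h1
    simp only [] at h1
    have h2 : ε0 * D t xs ys = 0 := by linarith
    have h3 : D t xs ys ≠ 0 := by
      rw [hDdef]
      simp only []
      exact mul_ne_zero (mul_ne_zero (hapos t xs).ne' (hbpos t ys).ne')
        (mul_ne_zero hxs hys)
    rcases mul_eq_zero.mp h2 with h | h
    · exact absurd h hε0.ne'
    · exact absurd h h3
  exact ⟨Qp, hmem, hne, fun Q hQ => by rw [hEnt]; exact hmax Q hQ⟩
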